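/- Let f be a primitive polynomial of degree k over F₂, let ℓ ≥ 1, and let s be a nonzero binary sequence whose minimal zero polynomial is f^ℓ. Then the least period of s equals (2^k − 1) · 2^i, where i = ⌈log₂ ℓ⌉. -/

import Mathlib

open Polynomial

noncomputable def polyApp (f : Polynomial (ZMod 2)) (s : ℕ → ZMod 2) : ℕ → ZMod 2 :=
  fun i => f.sum fun j c => c * s (i + j)

def HasPeriodDvd (s : ℕ → ZMod 2) (N : ℕ) : Prop := ∀ i, s (i + N) = s i

def IsLeastPeriod (s : ℕ → ZMod 2) (e : ℕ) : Prop :=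
  0 < e ∧ HasPeriodDvd s e ∧ ∀ m, 0 < m → HasPeriodDvd s m → e ≤ m

def IsMinZeroPoly (g : Polynomial (ZMod 2)) (s : ℕ → ZMod 2) : Prop :=
  g ≠ 0 ∧ polyApp g s = 0 ∧
    ∀ h : Polynomial (ZMod 2), h ≠ 0 → polyApp h s = 0 → g.natDegree ≤ h.natDegree

def IsExponent (f : Polynomial (ZMod 2)) (e : ℕ) : Prop :=
  0 < e ∧ f ∣ X ^ e - 1 ∧ ∀ m, 0 < m → f ∣ X ^ m - 1 → e ≤ m

def IsPrimitivePoly (f : Polynomial (ZMod 2)) (k : ℕ) : Prop :=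
  Irreducible f ∧ f.natDegree = k ∧ f.coeff 0 ≠ 0 ∧ IsExponent f (2 ^ k - 1)

/- ### Auxiliary machinery -/

noncomputable def Eop : Module.End (ZMod 2) (ℕ → ZMod 2) :=
  { toFun := fun s i => s (i+1), map_add' := fun _ _ => rfl, map_smul' := fun _ _ => rfl }

lemma Eop_pow (N : ℕ) (s : ℕ → ZMod 2) (i : ℕ) : (Eop ^ N) s i = s (i + N) := by
  induction N generalizing s i with
  | zero => simp
  | succ n ih =>
    rw [pow_succ']
    show ((Eop ^ n) s) (i + 1) = s (i + (n + 1))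
    rw [ih]
    congr 1
    omega

lemma polyApp_eq (f : Polynomial (ZMod 2)) (s : ℕ → ZMod 2) :
    polyApp f s = Polynomial.aeval Eop f s := by
  funext i
  rw [Polynomial.aeval_def, Polynomial.eval₂_eq_sum]
  show (f.sum fun j c => c * s (i + j)) = _
  rw [Polynomial.sum, Polynomial.sum, LinearMap.sum_apply, Finset.sum_apply]
  refine Finset.sum_congr rfl fun n _ => ?_
  rw [Algebra.algebraMap_eq_smul_one, smul_mul_assoc, one_mul, LinearMap.smul_apply]
  show f.coeff n * s (i + n) = (f.coeff n • ((Eop ^ n) s)) i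
  rw [Pi.smul_apply, Eop_pow, smul_eq_mul]

lemma polyApp_mul (g h : Polynomial (ZMod 2)) (s : ℕ → ZMod 2) :
    polyApp (g * h) s = polyApp g (polyApp h s) := by
  simp only [polyApp_eq]
  rw [map_mul]
  rfl

lemma period_iff (s : ℕ → ZMod 2) (N : ℕ) :
    HasPeriodDvd s N ↔ polyApp ((X : Polynomial (ZMod 2)) ^ N - 1) s = 0 := by
  have key : polyApp ((X : Polynomial (ZMod 2)) ^ N - 1) s = fun i => s (i + N) - s i := by
    rw [polyApp_eq, map_sub, map_one, map_pow, Polynomial.aeval_X]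
    funext i
    rw [LinearMap.sub_apply]
    show (Eop ^ N) s i - s i = _
    rw [Eop_pow]
  rw [key]
  constructor
  · intro h; funext i; rw [h i, sub_self]; rfl
  · intro h i
    have := congrFun h i
    simpa [sub_eq_zero] using this

lemma zmod2_eq_one (x : ZMod 2) (h : x ≠ 0) : x = 1 := by revert h; revert x; decide

lemma min_dvd {g : Polynomial (ZMod 2)} {s : ℕ → ZMod 2} (hmin : IsMinZeroPoly g s)
    (hg : g.Monic) (p : Polynomial (ZMod 2)) (hp : polyApp p s = 0) : g ∣ p := by
  have h1 : Polynomial.aeval Eop g s = 0 := by rw [← polyApp_eq]; exact hmin.2.1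
  have h2 : Polynomial.aeval Eop p s = 0 := by rw [← polyApp_eq]; exact hp
  have hr : polyApp (p %ₘ g) s = 0 := by
    have heq : p %ₘ g = p - g * (p /ₘ g) := by
      rw [eq_sub_iff_add_eq, Polynomial.modByMonic_add_div p g]
    rw [heq, mul_comm g, polyApp_eq, map_sub, map_mul, LinearMap.sub_apply,
      Module.End.mul_apply, h1, h2, map_zero, sub_zero]
  rcases eq_or_ne (p %ₘ g) 0 with h0 | h0
  · exact (Polynomial.modByMonic_eq_zero_iff_dvd hg).mp h0
  · exfalso
    have hle := hmin.2.2 _ h0 hr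
    have hlt := Polynomial.natDegree_lt_natDegree h0 (Polynomial.degree_modByMonic_lt p hg)
    omega

lemma sq_not_dvd {f : Polynomial (ZMod 2)} (hirr : Irreducible f) (m : ℕ)
    (hodd : m % 2 = 1) : ¬ f ^ 2 ∣ (X : Polynomial (ZMod 2)) ^ m - 1 := by
  intro hdvd
  have hm1 : 0 < m := by omega
  obtain ⟨q, hq⟩ := hdvd
  have hderiv : derivative ((X : Polynomial (ZMod 2)) ^ m - 1) = X ^ (m - 1) := by
    rw [derivative_sub, derivative_one, sub_zero, Polynomial.derivative_X_pow]
    have hcast : ((m : ZMod 2)) = 1 := by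
      rw [← ZMod.natCast_mod m 2, hodd, Nat.cast_one]
    rw [hcast, map_one, one_mul]
  have hfd : f ∣ (X : Polynomial (ZMod 2)) ^ (m - 1) := by
    rw [← hderiv, hq, derivative_mul, Polynomial.derivative_pow]
    refine dvd_add (Dvd.dvd.mul_right (Dvd.dvd.mul_right ?_ _) q) (Dvd.dvd.mul_right ?_ _)
    · exact Dvd.dvd.mul_left (dvd_pow_self f one_ne_zero) _
    · exact dvd_pow_self f two_ne_zero
  have hfX : f ∣ (X : Polynomial (ZMod 2)) ^ m := by
    have : (X : Polynomial (ZMod 2)) ^ m = X * X ^ (m - 1) := by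
      rw [← pow_succ']
      congr 1
      omega
    rw [this]
    exact hfd.mul_left X
  have hone : f ∣ (1 : Polynomial (ZMod 2)) := by
    have hsub : f ∣ (X : Polynomial (ZMod 2)) ^ m - 1 := ⟨f * q, by rw [hq]; ring⟩
    have := dvd_sub hfX hsub
    simpa using this
  exact hirr.not_isUnit (isUnit_of_dvd_one hone)

theorem least_period_of_primitive_power
    (f : Polynomial (ZMod 2)) (k : ℕ) (hf : IsPrimitivePoly f k)
    (ℓ : ℕ) (hℓ : 1 ≤ ℓ)
    (s : ℕ → ZMod 2) (hs : s ≠ 0) (hmin : IsMinZeroPoly (f ^ ℓ) s) :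
    IsLeastPeriod s ((2 ^ k - 1) * 2 ^ (Nat.clog 2 ℓ)) := by
  obtain ⟨hirr, hdeg, hc0, hepos, hedvd, heleast⟩ := hf
  set c := Nat.clog 2 ℓ with hc
  have hfne : f ≠ 0 := hirr.ne_zero
  have hfmonic : f.Monic := zmod2_eq_one _ (Polynomial.leadingCoeff_ne_zero.mpr hfne)
  have hgmonic : (f ^ ℓ).Monic := hfmonic.pow ℓ
  have hprime : Prime f := hirr.prime
  refine ⟨Nat.mul_pos hepos (Nat.pow_pos (n := c) two_pos), ?_, ?_⟩
  · -- it is a period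
    have hdvd : f ^ ℓ ∣ (X : Polynomial (ZMod 2)) ^ ((2 ^ k - 1) * 2 ^ c) - 1 := by
      have h1 : (X : Polynomial (ZMod 2)) ^ ((2 ^ k - 1) * 2 ^ c) - 1
          = ((X : Polynomial (ZMod 2)) ^ (2 ^ k - 1) - 1) ^ (2 ^ c) := by
        rw [sub_pow_char_pow, one_pow, ← pow_mul]
      rw [h1]
      exact (pow_dvd_pow f (Nat.le_pow_clog one_lt_two ℓ)).trans (pow_dvd_pow_of_dvd hedvd _)
    obtain ⟨q, hq⟩ := hdvd
    rw [period_iff, hq, mul_comm, polyApp_mul, hmin.2.1, polyApp_eq, map_zero]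
  · -- it is least
    intro m hm hper
    have hz : polyApp ((X : Polynomial (ZMod 2)) ^ m - 1) s = 0 := (period_iff s m).mp hper
    have hdvd : f ^ ℓ ∣ (X : Polynomial (ZMod 2)) ^ m - 1 := min_dvd hmin hgmonic _ hz
    set a := m.factorization 2 with ha
    set m' := m / 2 ^ a with hm'
    have hmm : 2 ^ a * m' = m := Nat.ordProj_mul_ordCompl_eq_self m 2
    have hodd : ¬ 2 ∣ m' := Nat.not_dvd_ordCompl Nat.prime_two hm.ne'
    have hm'odd : m' % 2 = 1 := by omega
    have hm'pos : 0 < m' := Nat.ordCompl_pos 2 hm.ne'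
    have hsplit : (X : Polynomial (ZMod 2)) ^ m - 1
        = ((X : Polynomial (ZMod 2)) ^ m' - 1) ^ (2 ^ a) := by
      rw [sub_pow_char_pow, one_pow, ← pow_mul]
      congr 2
      rw [mul_comm]
      exact hmm.symm
    have hfdvd' : f ∣ (X : Polynomial (ZMod 2)) ^ m' - 1 := by
      refine hprime.dvd_of_dvd_pow (n := 2 ^ a) ?_
      rw [← hsplit]
      exact (dvd_pow_self f (Nat.one_le_iff_ne_zero.mp hℓ)).trans hdvd
    have hsq := sq_not_dvd hirr m' hm'odd
    obtain ⟨u, hu⟩ := hfdvd'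
    have hfu : ¬ f ∣ u := by
      intro hdu
      obtain ⟨v, hv⟩ := hdu
      exact hsq ⟨v, by rw [hu, hv]; ring⟩
    have hle : ℓ ≤ 2 ^ a := by
      by_contra hlt
      push_neg at hlt
      have h1 : f ^ 2 ^ a * f ∣ f ^ ℓ := by
        rw [← pow_succ]; exact pow_dvd_pow f hlt
      have h2 : f ^ 2 ^ a * f ∣ f ^ 2 ^ a * u ^ 2 ^ a := by
        refine h1.trans ?_
        rw [← mul_pow, ← hu, ← hsplit]
        exact hdvd
      have h3 : f ∣ u ^ 2 ^ a := (mul_dvd_mul_iff_left (pow_ne_zero _ hfne)).mp h2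
      exact hfu (hprime.dvd_of_dvd_pow h3)
    have hca : c ≤ a := (Nat.clog_le_iff_le_pow one_lt_two).mpr hle
    have h2k : 2 ^ k - 1 ≤ m' := heleast m' hm'pos ⟨u, hu⟩
    calc (2 ^ k - 1) * 2 ^ c ≤ m' * 2 ^ a :=
          Nat.mul_le_mul h2k (Nat.pow_le_pow_right (by norm_num) hca)
      _ = m := by rw [mul_comm]; exact hmm
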